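/- The error in the Lagrange multiplier satisfies the a posteriori bound ‖p - p_N‖_Y ≤ (1 + √(γ_a/α_a))·‖r¹‖_{X'}/β + (γ_a/β²)·‖r²‖_{Y'}. -/

import Mathlib

set_option maxHeartbeats 1000000

lemma cs_aux {X : Type*} [NormedAddCommGroup X] [InnerProductSpace ℝ X]
    (a : X →ₗ[ℝ] X →ₗ[ℝ] ℝ) (hs : ∀ w v, a w v = a v w) (hpos : ∀ v : X, 0 ≤ a v v)
    (x y : X) : a x y ≤ Real.sqrt (a x x) * Real.sqrt (a y y) := by
  have key : (a x y) ^ 2 ≤ a x x * a y y := by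
    have hq : ∀ t : ℝ, 0 ≤ (a y y) * (t * t) + (2 * a x y) * t + (a x x) := by
      intro t
      have h := hpos (x + t • y)
      have : a (x + t • y) (x + t • y)
          = (a y y) * (t * t) + (2 * a x y) * t + (a x x) := by
        simp only [map_add, map_smul, LinearMap.add_apply, LinearMap.smul_apply,
          smul_eq_mul]
        rw [hs y x]; ring
      linarith [this ▸ h]
    have hd := discrim_le_zero hq
    rw [discrim] at hd
    nlinarith
  calc a x y ≤ |a x y| := le_abs_self _
    _ = Real.sqrt ((a x y) ^ 2) := (Real.sqrt_sq_eq_abs _).symm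
    _ ≤ Real.sqrt (a x x * a y y) := Real.sqrt_le_sqrt key
    _ = Real.sqrt (a x x) * Real.sqrt (a y y) := Real.sqrt_mul (hpos x) _

theorem stmt6
  {X Y : Type*} [NormedAddCommGroup X] [InnerProductSpace ℝ X] [FiniteDimensional ℝ X]
  [NormedAddCommGroup Y] [InnerProductSpace ℝ Y] [FiniteDimensional ℝ Y]
  (a : X →ₗ[ℝ] X →ₗ[ℝ] ℝ) (b : X →ₗ[ℝ] Y →ₗ[ℝ] ℝ)
  (ha_symm : ∀ w v : X, a w v = a v w)
  (αa γa : ℝ) (hαa : 0 < αa) (hγa : 0 < γa)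
  (ha_coer : ∀ v : X, αa * ‖v‖ ^ 2 ≤ a v v)
  (ha_cont : ∀ w v : X, a w v ≤ γa * ‖w‖ * ‖v‖)
  (β : ℝ) (hβ : 0 < β)
  (hinfsup : ∀ q : Y, β * ‖q‖ ≤ ⨆ v : {v : X // v ≠ 0}, b v.1 q / ‖v.1‖)
  (f : X →ₗ[ℝ] ℝ) (g : Y →ₗ[ℝ] ℝ)
  (u : X) (p : Y)
  (htruth1 : ∀ v : X, a u v + b v p = f v)
  (htruth2 : ∀ q : Y, b u q = g q)
  (XN : Submodule ℝ X) (YN : Submodule ℝ Y)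
  (uN : X) (pN : Y) (huN : uN ∈ XN) (hpN : pN ∈ YN)
  (hrb1 : ∀ v ∈ XN, a uN v + b v pN = f v)
  (hrb2 : ∀ q ∈ YN, b uN q = g q)
:
    ‖p - pN‖ ≤ (1 + Real.sqrt (γa / αa)) * (⨆ v : {v : X // v ≠ 0}, (f v.1 - a uN v.1 - b v.1 pN) / ‖v.1‖) / β + (γa / β ^ 2) * (⨆ q : {q : Y // q ≠ 0}, (g q.1 - b uN q.1) / ‖q.1‖) := by
  have hpos : ∀ v : X, 0 ≤ a v v := fun v =>
    le_trans (by positivity) (ha_coer v)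
  set R1 : ℝ := ⨆ v : {v : X // v ≠ 0}, (f v.1 - a uN v.1 - b v.1 pN) / ‖v.1‖ with hR1def
  set R2 : ℝ := ⨆ q : {q : Y // q ≠ 0}, (g q.1 - b uN q.1) / ‖q.1‖ with hR2def
  clear_value R1 R2
  -- residual identities
  have hr1 : ∀ v : X, f v - a uN v - b v pN = a (u - uN) v + b v (p - pN) := by
    intro v
    have h := htruth1 v
    simp only [map_sub, LinearMap.sub_apply] at *
    linarith
  have hr2 : ∀ q : Y, g q - b uN q = b (u - uN) q := by
    intro q
    have h := htruth2 q
    simp only [map_sub, LinearMap.sub_apply] at *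
    linarith
  -- boundedness of the two sup families
  have bdd1 : BddAbove (Set.range fun v : {v : X // v ≠ 0} =>
      (f v.1 - a uN v.1 - b v.1 pN) / ‖v.1‖) := by
    set r1l : X →ₗ[ℝ] ℝ := f - a uN - b.flip pN with hr1l
    refine ⟨‖LinearMap.toContinuousLinearMap r1l‖, ?_⟩
    rintro x ⟨v, rfl⟩
    have hv : (0:ℝ) < ‖v.1‖ := norm_pos_iff.mpr v.2
    rw [div_le_iff₀ hv]
    have h1 : f v.1 - a uN v.1 - b v.1 pN = (LinearMap.toContinuousLinearMap r1l) v.1 := by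
      simp [hr1l, LinearMap.sub_apply, LinearMap.flip_apply]
    rw [h1]
    calc (LinearMap.toContinuousLinearMap r1l) v.1
        ≤ ‖(LinearMap.toContinuousLinearMap r1l) v.1‖ := le_abs_self _
      _ ≤ ‖LinearMap.toContinuousLinearMap r1l‖ * ‖v.1‖ :=
        (LinearMap.toContinuousLinearMap r1l).le_opNorm v.1
  have bdd2 : BddAbove (Set.range fun q : {q : Y // q ≠ 0} =>
      (g q.1 - b uN q.1) / ‖q.1‖) := by
    set r2l : Y →ₗ[ℝ] ℝ := g - b uN with hr2l
    refine ⟨‖LinearMap.toContinuousLinearMap r2l‖, ?_⟩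
    rintro x ⟨q, rfl⟩
    have hq : (0:ℝ) < ‖q.1‖ := norm_pos_iff.mpr q.2
    rw [div_le_iff₀ hq]
    have h1 : g q.1 - b uN q.1 = (LinearMap.toContinuousLinearMap r2l) q.1 := by
      simp [hr2l, LinearMap.sub_apply]
    rw [h1]
    calc (LinearMap.toContinuousLinearMap r2l) q.1
        ≤ ‖(LinearMap.toContinuousLinearMap r2l) q.1‖ := le_abs_self _
      _ ≤ ‖LinearMap.toContinuousLinearMap r2l‖ * ‖q.1‖ :=
        (LinearMap.toContinuousLinearMap r2l).le_opNorm q.1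
  -- pointwise bounds by the dual norms
  have A1 : ∀ v : X, f v - a uN v - b v pN ≤ R1 * ‖v‖ := by
    intro v
    by_cases hv : v = 0
    · simp [hv]
    · have h := le_ciSup bdd1 (⟨v, hv⟩ : {v : X // v ≠ 0})
      rw [← hR1def] at h
      have hn : (0:ℝ) < ‖v‖ := norm_pos_iff.mpr hv
      rw [div_le_iff₀ hn] at h
      linarith [h]
  have A2 : ∀ q : Y, g q - b uN q ≤ R2 * ‖q‖ := by
    intro q
    by_cases hq : q = 0
    · simp [hq]
    · have h := le_ciSup bdd2 (⟨q, hq⟩ : {q : Y // q ≠ 0})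
      rw [← hR2def] at h
      have hn : (0:ℝ) < ‖q‖ := norm_pos_iff.mpr hq
      rw [div_le_iff₀ hn] at h
      linarith [h]
  rcases subsingleton_or_nontrivial Y with hY | hY
  · -- degenerate case: Y is trivial
    have hpp : p - pN = 0 := Subsingleton.elim _ _
    have hR2 : R2 = 0 := by
      have : IsEmpty {q : Y // q ≠ 0} := by
        constructor; rintro ⟨q, hq⟩; exact hq (Subsingleton.elim _ _)
      rw [hR2def, Real.iSup_of_isEmpty]
    have hR1nn : 0 ≤ R1 := by
      rcases subsingleton_or_nontrivial X with hX | hX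
      · have : IsEmpty {v : X // v ≠ 0} := by
          constructor; rintro ⟨v, hv⟩; exact hv (Subsingleton.elim _ _)
        rw [hR1def, Real.iSup_of_isEmpty]
      · obtain ⟨v, hv⟩ := exists_ne (0 : X)
        have h1 := A1 v
        have h2 := A1 (-v)
        simp only [map_neg, LinearMap.neg_apply, norm_neg] at h2
        have hn : (0:ℝ) < ‖v‖ := norm_pos_iff.mpr hv
        nlinarith
    rw [hpp, hR2]
    have hs : (0:ℝ) ≤ Real.sqrt (γa / αa) := Real.sqrt_nonneg _
    have : (0:ℝ) ≤ (1 + Real.sqrt (γa / αa)) * R1 / β := by positivity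
    simpa using this
  -- main case : Y nontrivial
  have hX : Nontrivial X := by
    rcases subsingleton_or_nontrivial X with hX | hX
    · exfalso
      obtain ⟨q, hq⟩ := exists_ne (0 : Y)
      have h := hinfsup q
      have : IsEmpty {v : X // v ≠ 0} := by
        constructor; rintro ⟨v, hv⟩; exact hv (Subsingleton.elim _ _)
      rw [Real.iSup_of_isEmpty] at h
      have hn : (0:ℝ) < ‖q‖ := norm_pos_iff.mpr hq
      nlinarith
    · exact hX
  have hNE : Nonempty {v : X // v ≠ 0} := by
    obtain ⟨v, hv⟩ := exists_ne (0 : X); exact ⟨⟨v, hv⟩⟩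
  have hR1nn : 0 ≤ R1 := by
    obtain ⟨v, hv⟩ := exists_ne (0 : X)
    have h1 := A1 v
    have h2 := A1 (-v)
    simp only [map_neg, LinearMap.neg_apply, norm_neg] at h2
    have hn : (0:ℝ) < ‖v‖ := norm_pos_iff.mpr hv
    nlinarith
  have hR2nn : 0 ≤ R2 := by
    obtain ⟨q, hq⟩ := exists_ne (0 : Y)
    have h1 := A2 q
    have h2 := A2 (-q)
    simp only [map_neg, LinearMap.neg_apply, norm_neg] at h2
    have hn : (0:ℝ) < ‖q‖ := norm_pos_iff.mpr hq
    nlinarith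
  have : CompleteSpace X := FiniteDimensional.complete ℝ X
  -- the "transpose" map S with ⟪S q, v⟫ = b v q
  set S : Y →ₗ[ℝ] X :=
    { toFun := fun q => (InnerProductSpace.toDual ℝ X).symm
        (LinearMap.toContinuousLinearMap (b.flip q))
      map_add' := by intro q q'; simp [map_add]
      map_smul' := by intro r q; simp } with hSdef
  have hS : ∀ q v, (inner ℝ (S q) v : ℝ) = b v q := by
    intro q v
    simp [hSdef, InnerProductSpace.toDual_symm_apply]
  clear_value S
  have hSnorm : ∀ q : Y, β * ‖q‖ ≤ ‖S q‖ := by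
    intro q
    refine le_trans (hinfsup q) (ciSup_le ?_)
    rintro ⟨v, hv⟩
    have hn : (0:ℝ) < ‖v‖ := norm_pos_iff.mpr hv
    rw [div_le_iff₀ hn]
    calc b v q = (inner ℝ (S q) v : ℝ) := (hS q v).symm
      _ ≤ ‖S q‖ * ‖v‖ := real_inner_le_norm _ _
  -- solve for the minimal-norm supremizer w0 with b w0 q = r2 q
  have hinjT : Function.Injective (b.comp S) := by
    rw [← LinearMap.ker_eq_bot]
    rw [LinearMap.ker_eq_bot']
    intro s hs
    have h0 : b (S s) s = 0 := by
      rw [LinearMap.comp_apply] at hs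
      rw [hs]; rfl
    have h1 : (inner ℝ (S s) (S s) : ℝ) = 0 := by rw [hS s (S s)]; exact h0
    have h2 : S s = 0 := inner_self_eq_zero.mp h1
    have h3 := hSnorm s
    rw [h2, norm_zero] at h3
    have : ‖s‖ = 0 := le_antisymm (by nlinarith) (norm_nonneg s)
    exact norm_eq_zero.mp this
  have hsurjT : Function.Surjective (b.comp S) := by
    have hdim : Module.finrank ℝ Y = Module.finrank ℝ (Y →ₗ[ℝ] ℝ) :=
      (Subspace.dual_finrank_eq (K := ℝ) (V := Y)).symm
    exact (LinearMap.injective_iff_surjective_of_finrank_eq_finrank hdim).mp hinjT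
  obtain ⟨s, hs⟩ := hsurjT (g - b uN)
  set w0 : X := S s with hw0def
  clear_value w0
  have hw0 : ∀ q : Y, b w0 q = g q - b uN q := by
    intro q
    rw [hw0def]
    have := congrArg (fun φ => φ q) hs
    simpa [LinearMap.comp_apply, LinearMap.sub_apply] using this
  have hw0norm : β * ‖w0‖ ≤ R2 := by
    rcases eq_or_ne w0 0 with h | h
    · rw [h, norm_zero]; simpa using hR2nn
    · have hn : (0:ℝ) < ‖w0‖ := norm_pos_iff.mpr h
      have h1 : ‖w0‖ ^ 2 = b w0 s := by
        rw [hw0def, ← hS s (S s), real_inner_self_eq_norm_sq]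
      have h2 : b w0 s ≤ R2 * ‖s‖ := by rw [hw0 s]; exact A2 s
      have h3 : β * ‖s‖ ≤ ‖w0‖ := by rw [hw0def]; exact hSnorm s
      have h4 : 0 ≤ ‖s‖ := norm_nonneg s
      nlinarith
  -- a-orthogonal correction inside the kernel of b
  set K : Submodule ℝ X := LinearMap.ker b with hKdef
  clear_value K
  have hKmem : ∀ z : X, z ∈ K ↔ ∀ q, b z q = 0 := by
    intro z
    rw [hKdef, LinearMap.mem_ker]
    constructor
    · intro h q; rw [h]; rfl
    · intro h; ext q; exact h q
  set M : K →ₗ[ℝ] (K →ₗ[ℝ] ℝ) :=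
    (LinearMap.domRestrict' K).comp (a.domRestrict K) with hMdef
  have hM : ∀ z z' : K, M z z' = a z.1 z'.1 := by
    intro z z'
    simp [hMdef, LinearMap.domRestrict']
  clear_value M
  have hinjM : Function.Injective M := by
    rw [← LinearMap.ker_eq_bot, LinearMap.ker_eq_bot']
    intro z hz
    have h0 : a z.1 z.1 = 0 := by
      have h := hM z z
      rw [hz] at h
      simpa using h.symm
    have h1 := ha_coer z.1
    have h2 : ‖z.1‖ ^ 2 = 0 := le_antisymm (by nlinarith) (sq_nonneg _)
    have h3 : ‖z.1‖ = 0 := by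
      exact pow_eq_zero_iff (two_ne_zero) |>.mp h2
    exact Subtype.ext (norm_eq_zero.mp h3)
  have hsurjM : Function.Surjective M := by
    have hdim : Module.finrank ℝ K = Module.finrank ℝ (K →ₗ[ℝ] ℝ) :=
      (Subspace.dual_finrank_eq (K := ℝ) (V := K)).symm
    exact (LinearMap.injective_iff_surjective_of_finrank_eq_finrank hdim).mp hinjM
  obtain ⟨z0K, hz0K⟩ := hsurjM ((a w0).domRestrict K)
  set z0 : X := z0K.1 with hz0def
  clear_value z0
  have hz0mem : ∀ q, b z0 q = 0 := by rw [hz0def]; exact (hKmem _).mp z0K.2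
  have hz0a : ∀ z : X, (∀ q, b z q = 0) → a z0 z = a w0 z := by
    intro z hz
    have hzK : z ∈ K := (hKmem z).mpr hz
    rw [hz0def]
    have := congrArg (fun φ => φ (⟨z, hzK⟩ : K)) hz0K
    simpa [hM, LinearMap.domRestrict_apply] using this
  set w : X := w0 - z0 with hwdef
  clear_value w
  clear hz0def hz0K z0K hw0def hM hinjM hsurjM hMdef M hKmem hKdef K hinjT hsurjT hs hS hSnorm hSdef this bdd1 bdd2 htruth1 hrb1 hrb2 huN hpN
  have hwq : ∀ q : Y, b w q = g q - b uN q := by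
    intro q
    rw [hwdef]
    simp only [map_sub, LinearMap.sub_apply]
    rw [hw0 q, hz0mem q]; ring
  have hwa : ∀ z : X, (∀ q, b z q = 0) → a w z = 0 := by
    intro z hz
    rw [hwdef]
    simp only [map_sub, LinearMap.sub_apply]
    rw [hz0a z hz]; ring
  have hww : a w w ≤ γa * ‖w0‖ ^ 2 := by
    have h1 : a w0 w0 = a w w + a z0 z0 := by
      have e1 : a w z0 = 0 := hwa z0 hz0mem
      have e2 : a z0 w = 0 := by rw [ha_symm]; exact e1
      have : w0 = w + z0 := by rw [hwdef]; abel
      rw [this]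
      simp only [map_add, LinearMap.add_apply]
      rw [e1, e2]; ring
    have h2 := hpos z0
    have h3 := ha_cont w0 w0
    nlinarith [sq_nonneg ‖w0‖]
  -- the kernel part z of the velocity error
  set z : X := (u - uN) - w with hzdef
  clear_value z
  have hzq : ∀ q : Y, b z q = 0 := by
    intro q
    rw [hzdef]
    simp only [map_sub, LinearMap.sub_apply]
    rw [htruth2 q, hwq q]; ring
  have heu : ∀ v : X, a (u - uN) v = a z v + a w v := by
    intro v
    have : (u - uN) = z + w := by rw [hzdef]; abel
    rw [this]
    simp only [map_add, LinearMap.add_apply]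
  have hzz : a z z ≤ R1 * ‖z‖ := by
    have h1 : f z - a uN z - b z pN = a (u - uN) z + b z (p - pN) := hr1 z
    have h2 : b z (p - pN) = 0 := by
      rw [map_sub, hzq p, hzq pN]; ring
    have h3 : a w z = 0 := hwa z hzq
    have h4 := heu z
    have h5 : a z z = f z - a uN z - b z pN := by linarith
    rw [h5]; exact A1 z
  -- square root bounds
  have hsq_avv : ∀ v : X, Real.sqrt (a v v) ≤ Real.sqrt γa * ‖v‖ := by
    intro v
    have h1 : a v v ≤ γa * ‖v‖ ^ 2 := by nlinarith [ha_cont v v, sq_nonneg ‖v‖]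
    calc Real.sqrt (a v v) ≤ Real.sqrt (γa * ‖v‖ ^ 2) := Real.sqrt_le_sqrt h1
      _ = Real.sqrt γa * ‖v‖ := by
          rw [Real.sqrt_mul hγa.le, Real.sqrt_sq (norm_nonneg v)]
  have hsq_z : Real.sqrt (a z z) ≤ R1 / Real.sqrt αa := by
    have h0 := hpos z
    have h1 := ha_coer z
    have h2 : a z z ≤ R1 ^ 2 / αa := by
      rcases eq_or_lt_of_le h0 with h | h
      · rw [← h]; positivity
      · rw [le_div_iff₀ hαa]
        have hzpos : 0 < ‖z‖ := by
          by_contra hc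
          push_neg at hc
          have hz0 : ‖z‖ = 0 := le_antisymm hc (norm_nonneg z)
          rw [hz0, mul_zero] at hzz
          linarith
        have k1 : αa * ‖z‖ ≤ R1 := by nlinarith [h1, hzz, hzpos]
        have k2 := mul_le_mul_of_nonneg_left k1 hR1nn
        have k3 := mul_le_mul_of_nonneg_right hzz hαa.le
        nlinarith [k2, k3]
    calc Real.sqrt (a z z) ≤ Real.sqrt (R1 ^ 2 / αa) := Real.sqrt_le_sqrt h2
      _ = R1 / Real.sqrt αa := by
          rw [Real.sqrt_div (by positivity), Real.sqrt_sq hR1nn]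
  have hsq_w : Real.sqrt (a w w) ≤ Real.sqrt γa * ‖w0‖ := by
    calc Real.sqrt (a w w) ≤ Real.sqrt (γa * ‖w0‖ ^ 2) := Real.sqrt_le_sqrt hww
      _ = Real.sqrt γa * ‖w0‖ := by
          rw [Real.sqrt_mul hγa.le, Real.sqrt_sq (norm_nonneg w0)]
  have hsqdiv : Real.sqrt γa / Real.sqrt αa = Real.sqrt (γa / αa) := by
    rw [Real.sqrt_div hγa.le]
  have hazv : ∀ v : X, a z v ≤ Real.sqrt (γa / αa) * R1 * ‖v‖ := by
    intro v
    calc a z v ≤ Real.sqrt (a z z) * Real.sqrt (a v v) := cs_aux a ha_symm hpos z v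
      _ ≤ (R1 / Real.sqrt αa) * (Real.sqrt γa * ‖v‖) := by
          apply mul_le_mul hsq_z (hsq_avv v) (Real.sqrt_nonneg _)
          positivity
      _ = (Real.sqrt γa / Real.sqrt αa) * R1 * ‖v‖ := by ring
      _ = Real.sqrt (γa / αa) * R1 * ‖v‖ := by rw [hsqdiv]
  have hawv : ∀ v : X, a w v ≤ γa * (R2 / β) * ‖v‖ := by
    intro v
    have hwnorm : ‖w0‖ ≤ R2 / β := by rw [le_div_iff₀ hβ]; linarith [hw0norm]
    calc a w v ≤ Real.sqrt (a w w) * Real.sqrt (a v v) := cs_aux a ha_symm hpos w v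
      _ ≤ (Real.sqrt γa * ‖w0‖) * (Real.sqrt γa * ‖v‖) := by
          apply mul_le_mul hsq_w (hsq_avv v) (Real.sqrt_nonneg _)
          positivity
      _ = (Real.sqrt γa * Real.sqrt γa) * ‖w0‖ * ‖v‖ := by ring
      _ = γa * ‖w0‖ * ‖v‖ := by rw [Real.mul_self_sqrt hγa.le]
      _ ≤ γa * (R2 / β) * ‖v‖ := by
          apply mul_le_mul_of_nonneg_right _ (norm_nonneg v)
          exact mul_le_mul_of_nonneg_left hwnorm hγa.le
  -- final estimate
  have hfin : β * ‖p - pN‖ ≤ (1 + Real.sqrt (γa / αa)) * R1 + γa * (R2 / β) := by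
    refine le_trans (hinfsup (p - pN)) (ciSup_le ?_)
    rintro ⟨v, hv⟩
    have hn : (0:ℝ) < ‖v‖ := norm_pos_iff.mpr hv
    rw [div_le_iff₀ hn]
    have h1 : f v - a uN v - b v pN ≤ R1 * ‖v‖ := A1 v
    have e1 : a z (-v) = -(a z v) := by rw [map_neg]
    have e2 : a w (-v) = -(a w v) := by rw [map_neg]
    have h2 : -(a z v) ≤ Real.sqrt (γa / αa) * R1 * ‖v‖ := by
      have := hazv (-v)
      rw [e1, norm_neg] at this
      exact this
    have h3 : -(a w v) ≤ γa * (R2 / β) * ‖v‖ := by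
      have := hawv (-v)
      rw [e2, norm_neg] at this
      exact this
    have h4 : b v (p - pN) = (f v - a uN v - b v pN) - a z v - a w v := by
      have := hr1 v
      have := heu v
      linarith
    rw [h4]
    nlinarith
  have hgoal : ‖p - pN‖ ≤ ((1 + Real.sqrt (γa / αa)) * R1 + γa * (R2 / β)) / β := by
    rw [le_div_iff₀ hβ]
    nlinarith [hfin]
  refine le_trans hgoal (le_of_eq ?_)
  field_simp
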